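/- arXiv:1907.11153 — 4 statements merged into one kernel-verified Lean document; each statement's English description precedes it below -/
import Mathlib

section
/- For every N ≥ 1, every choice of Jacobi coefficients and every control f, the solution of the finite system admits the representation v^f_{n,t} = Σ_{k=1}^N c^k_t φ_n(λ_k) for all 1 ≤ n ≤ N and t ≥ 0, where c^k_t = ρ_k^{-1} Σ_{s=0}^{t} 𝒯_s(λ_k) f_{t-s}. -/
open scoped BigOperators

/-- Chebyshev polynomials of the second kind (paper normalization):
`𝒯 0 = 0`, `𝒯 1 = 1`, `𝒯 (t+2) = λ · 𝒯 (t+1) − 𝒯 t`. -/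
def chebU (x : ℝ) : ℕ → ℝ
  | 0 => 0
  | 1 => 1
  | t + 2 => x * chebU x (t + 1) - chebU x t

/-- The solution `v^f` of the finite dynamical system of size `N`:
`v_{n,t+1} + v_{n,t-1} - a_n v_{n+1,t} - a_{n-1} v_{n-1,t} - b_n v_{n,t} = 0` for `1 ≤ n ≤ N`,
`v_{n,-1} = v_{n,0} = 0`, `v_{0,t} = f_t`, `v_{N+1,t} = 0`.
`solF N a b f n t` is `v_{n,t}`. -/
def solF (N : ℕ) (a b f : ℕ → ℝ) : ℕ → ℕ → ℝ
  | n, 0 => if n = 0 then f 0 else 0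
  | n, 1 =>
      if n = 0 then f 1
      else if N < n then 0
      else a n * solF N a b f (n + 1) 0 + a (n - 1) * solF N a b f (n - 1) 0
        + b n * solF N a b f n 0
  | n, t + 2 =>
      if n = 0 then f (t + 2)
      else if N < n then 0
      else a n * solF N a b f (n + 1) (t + 1) + a (n - 1) * solF N a b f (n - 1) (t + 1)
        + b n * solF N a b f n (t + 1) - solF N a b f n t
  termination_by n t => t

/-- `φ_n(λ)`: `φ_0 = 0`, `φ_1 = 1`,
`a_n φ_{n+1} + a_{n-1} φ_{n-1} + b_n φ_n = λ φ_n` for `n ≥ 1`. -/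
noncomputable def phiP (a b : ℕ → ℝ) : ℕ → ℝ → ℝ
  | 0, _ => 0
  | 1, _ => 1
  | n + 2, x => ((x - b (n + 1)) * phiP a b (n + 1) x - a n * phiP a b n x) / a (n + 1)

/-! ### Auxiliary lemmas -/

lemma phiP_rec (a b : ℕ → ℝ) (hapos : ∀ n, 0 < a n) (x : ℝ) :
    ∀ n, 1 ≤ n → a n * phiP a b (n+1) x + a (n-1) * phiP a b (n-1) x + b n * phiP a b n x
      = x * phiP a b n x := by
  intro n hn
  match n, hn with
  | 1, _ =>
      have h1 : a 1 ≠ 0 := (hapos 1).ne'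
      simp only [phiP]
      field_simp
      simp only [Nat.sub_self, phiP]
      ring
  | (m+2), _ =>
      have h1 : a (m+1) ≠ 0 := (hapos (m+1)).ne'
      show a (m+2) * phiP a b (m+3) x + a (m+1) * phiP a b (m+1) x
          + b (m+2) * phiP a b (m+2) x = x * phiP a b (m+2) x
      have h2 : a (m+2) ≠ 0 := (hapos (m+2)).ne'
      rw [show phiP a b (m+3) x
        = ((x - b (m + 2)) * phiP a b (m + 2) x - a (m+1) * phiP a b (m+1) x) / a (m + 2)
        from rfl]
      field_simp
      ring

lemma cheb_sum_rec (x : ℝ) (f : ℕ → ℝ) (t : ℕ) :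
    ∑ s ∈ Finset.range (t+3), chebU x s * f (t+2-s)
      = x * ∑ s ∈ Finset.range (t+2), chebU x s * f (t+1-s)
        - ∑ s ∈ Finset.range (t+1), chebU x s * f (t-s) + f (t+1) := by
  rw [Finset.sum_range_succ' (fun s => chebU x s * f (t+2-s)) (t+2),
      Finset.sum_range_succ' (fun s => chebU x (s+1) * f (t+2-(s+1))) (t+1),
      Finset.sum_range_succ' (fun s => chebU x s * f (t+1-s)) (t+1)]
  have h1 : ∀ s ∈ Finset.range (t+1),
      chebU x (s+1+1) * f (t+2-(s+1+1)) =
        x * (chebU x (s+1) * f (t+1-(s+1))) - chebU x s * f (t-s) := by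
    intro s hs
    have e1 : t+2-(s+1+1) = t - s := by omega
    rw [e1]
    have e2 : t+1-(s+1) = t - s := by omega
    rw [e2]
    show (x * chebU x (s+1) - chebU x s) * f (t-s) = _
    ring
  rw [Finset.sum_congr rfl h1, Finset.sum_sub_distrib, ← Finset.mul_sum]
  simp [chebU]

lemma phi_orth (a b : ℕ → ℝ) (hapos : ∀ n, 0 < a n) (N : ℕ) (x y : ℝ)
    (hx : phiP a b (N+1) x = 0) (hy : phiP a b (N+1) y = 0) (hxy : x ≠ y) :
    ∑ i ∈ Finset.Icc 1 N, phiP a b i x * phiP a b i y = 0 := by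
  set W : ℕ → ℝ := fun n =>
    a n * (phiP a b (n+1) x * phiP a b n y - phiP a b n x * phiP a b (n+1) y) with hW
  have key : ∀ i ∈ Finset.range N,
      (x - y) * (phiP a b (i+1) x * phiP a b (i+1) y) = W (i+1) - W i := by
    intro i _
    have hx' := phiP_rec a b hapos x (i+1) (by omega)
    have hy' := phiP_rec a b hapos y (i+1) (by omega)
    simp only [Nat.add_sub_cancel] at hx' hy'
    simp only [hW]
    linear_combination (phiP a b (i+1) x) * hy' - (phiP a b (i+1) y) * hx'
  have tele : ∑ i ∈ Finset.range N, ((x - y) * (phiP a b (i+1) x * phiP a b (i+1) y))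
      = W N - W 0 := by
    rw [Finset.sum_congr rfl key]
    exact Finset.sum_range_sub W N
  have hW0 : W 0 = 0 := by simp [hW, phiP]
  have hWN : W N = 0 := by simp [hW, hx, hy]
  have hIcc : ∑ i ∈ Finset.Icc 1 N, phiP a b i x * phiP a b i y
      = ∑ i ∈ Finset.range N, phiP a b (i+1) x * phiP a b (i+1) y := by
    rw [← Finset.Ico_add_one_right_eq_Icc, Finset.sum_Ico_eq_sum_range]
    simp [add_comm]
  rw [hIcc]
  rw [← Finset.mul_sum] at tele
  rw [hW0, hWN, sub_zero] at tele
  rcases mul_eq_zero.mp tele with h | h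
  · exact absurd (sub_eq_zero.mp h) hxy
  · exact h

open Matrix in
lemma row_orth (N : ℕ) (hN : 1 ≤ N) (a b : ℕ → ℝ) (hapos : ∀ n, 0 < a n)
    (lam : Fin N → ℝ) (hinj : Function.Injective lam)
    (hroot : ∀ k, phiP a b (N + 1) (lam k) = 0) :
    ∀ n, 1 ≤ n → n ≤ N →
      ∑ k : Fin N, (∑ i ∈ Finset.Icc 1 N, (phiP a b i (lam k))^2)⁻¹ * phiP a b n (lam k)
        = if n = 1 then 1 else 0 := by
  set ρ : Fin N → ℝ := fun k => ∑ i ∈ Finset.Icc 1 N, (phiP a b i (lam k))^2 with hρ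
  have hρpos : ∀ k, 0 < ρ k := by
    intro k
    have h0 : phiP a b 1 (lam k) ^ 2 = 1 := by simp [phiP]
    have h1 : (1:ℝ) ≤ ∑ i ∈ Finset.Icc 1 N, phiP a b i (lam k)^2 := by
      rw [← h0]
      exact Finset.single_le_sum (f := fun i => phiP a b i (lam k)^2)
        (fun i _ => sq_nonneg _) (Finset.mem_Icc.mpr ⟨le_refl 1, hN⟩)
    simpa [hρ] using lt_of_lt_of_le one_pos h1
  set Φ : Matrix (Fin N) (Fin N) ℝ := Matrix.of fun i k => phiP a b ((i:ℕ)+1) (lam k) with hΦ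
  have hconv : ∀ x y : ℝ,
      ∑ j : Fin N, phiP a b ((j:ℕ)+1) x * phiP a b ((j:ℕ)+1) y
        = ∑ i ∈ Finset.Icc 1 N, phiP a b i x * phiP a b i y := by
    intro x y
    rw [← Finset.Ico_add_one_right_eq_Icc, Finset.sum_Ico_eq_sum_range,
      Fin.sum_univ_eq_sum_range (fun m => phiP a b (m+1) x * phiP a b (m+1) y) N]
    simp [add_comm]
  have hcol : Φᵀ * Φ = Matrix.diagonal ρ := by
    ext k l
    simp only [Matrix.mul_apply, Matrix.transpose_apply, Matrix.diagonal_apply,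
      Matrix.of_apply, hΦ]
    by_cases hkl : k = l
    · subst hkl
      rw [if_pos rfl, hconv]
      simp [hρ, sq]
    · rw [if_neg hkl, hconv]
      exact phi_orth a b hapos N _ _ (hroot k) (hroot l) (fun h => hkl (hinj h))
  have hdet : IsUnit Φ.det := by
    have h1 : Φᵀ.det * Φ.det = (Matrix.diagonal ρ).det := by rw [← Matrix.det_mul, hcol]
    rw [Matrix.det_transpose, Matrix.det_diagonal] at h1
    have h2 : ∏ k, ρ k ≠ 0 := Finset.prod_ne_zero_iff.mpr fun k _ => (hρpos k).ne'
    have h3 : Φ.det ≠ 0 := by intro h; rw [h, mul_zero] at h1; exact h2 h1.symm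
    exact isUnit_iff_ne_zero.mpr h3
  have key : Φ * Matrix.diagonal (fun k => (ρ k)⁻¹) * Φᵀ = 1 := by
    have hM : Φ * Matrix.diagonal (fun k => (ρ k)⁻¹) * Φᵀ * Φ = Φ := by
      rw [Matrix.mul_assoc (Φ * _), hcol, Matrix.mul_assoc, Matrix.diagonal_mul_diagonal]
      simp [inv_mul_cancel₀ (hρpos _).ne']
    calc Φ * Matrix.diagonal (fun k => (ρ k)⁻¹) * Φᵀ
        = (Φ * Matrix.diagonal (fun k => (ρ k)⁻¹) * Φᵀ * Φ) * Φ⁻¹ :=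
          (Matrix.mul_nonsing_inv_cancel_right _ _ hdet).symm
      _ = Φ * Φ⁻¹ := by rw [hM]
      _ = 1 := Matrix.mul_nonsing_inv _ hdet
  intro n h1 h2
  have e := congrFun (congrFun key ⟨n-1, by omega⟩) ⟨0, by omega⟩
  simp only [Matrix.mul_apply, Matrix.diagonal_apply, Matrix.transpose_apply,
    Matrix.one_apply, Matrix.of_apply, hΦ, mul_ite, ite_mul, mul_zero, zero_mul,
    Finset.sum_ite_eq, Finset.sum_ite_eq', Finset.mem_univ, if_true] at e
  have hn1 : (n-1)+1 = n := by omega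
  simp only [hn1] at e
  have hif : ((⟨n-1, by omega⟩ : Fin N) = ⟨0, by omega⟩) ↔ n = 1 := by
    simp only [Fin.ext_iff, Fin.val_mk]
    omega
  rw [if_congr hif rfl rfl] at e
  have hφ1 : ∀ k : Fin N, phiP a b (((⟨0, by omega⟩ : Fin N) : ℕ)+1) (lam k) = 1 := by
    intro k; simp [phiP]
  simp only [hφ1, mul_one] at e
  rw [← e]
  apply Finset.sum_congr rfl
  intro k _
  ring

/-- The coefficient `c^k_t`. -/
noncomputable def coefC (N : ℕ) (a b : ℕ → ℝ) (lam : Fin N → ℝ) (f : ℕ → ℝ)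
    (k : Fin N) (t : ℕ) : ℝ :=
  (∑ i ∈ Finset.Icc 1 N, (phiP a b i (lam k))^2)⁻¹
    * ∑ s ∈ Finset.range (t + 1), chebU (lam k) s * f (t - s)

lemma coefC_zero (N : ℕ) (a b : ℕ → ℝ) (lam : Fin N → ℝ) (f : ℕ → ℝ) (k : Fin N) :
    coefC N a b lam f k 0 = 0 := by
  simp [coefC, chebU]

lemma coefC_one (N : ℕ) (a b : ℕ → ℝ) (lam : Fin N → ℝ) (f : ℕ → ℝ) (k : Fin N) :
    coefC N a b lam f k 1 = (∑ i ∈ Finset.Icc 1 N, (phiP a b i (lam k))^2)⁻¹ * f 0 := by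
  simp [coefC, chebU, Finset.sum_range_succ]

lemma coefC_rec (N : ℕ) (a b : ℕ → ℝ) (lam : Fin N → ℝ) (f : ℕ → ℝ) (k : Fin N) (t : ℕ) :
    coefC N a b lam f k (t+2)
      = lam k * coefC N a b lam f k (t+1) - coefC N a b lam f k t
        + (∑ i ∈ Finset.Icc 1 N, (phiP a b i (lam k))^2)⁻¹ * f (t+1) := by
  simp only [coefC]
  rw [show (t+2)+1 = t+3 from rfl, cheb_sum_rec (lam k) f t]
  ring

lemma solF_left (N : ℕ) (a b f : ℕ → ℝ) (t : ℕ) : solF N a b f 0 t = f t := by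
  match t with
  | 0 => rw [solF]; simp
  | 1 => rw [solF]; simp
  | t+2 => rw [solF]; simp

lemma solF_gt (N : ℕ) (a b f : ℕ → ℝ) (m t : ℕ) (hN : 1 ≤ N) (h : N < m) :
    solF N a b f m t = 0 := by
  match t with
  | 0 => rw [solF]; rw [if_neg (by omega)]
  | 1 => rw [solF]; rw [if_neg (by omega), if_pos h]
  | t+2 => rw [solF]; rw [if_neg (by omega), if_pos h]

lemma solF_zero (N : ℕ) (a b f : ℕ → ℝ) (n : ℕ) (h : 1 ≤ n) : solF N a b f n 0 = 0 := by
  rw [solF]; rw [if_neg (by omega)]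

/-- spectral representation of the solution of the finite system:
`v^f_{n,t} = Σ_{k=1}^N c^k_t φ_n(λ_k)`, `c^k_t = ρ_k⁻¹ Σ_{s=0}^t 𝒯_s(λ_k) f_{t-s}`. -/
theorem finite_system_spectral_representation
    (N : ℕ) (hN : 1 ≤ N) (a b : ℕ → ℝ) (ha0 : a 0 = 1) (hapos : ∀ n, 0 < a n)
    (lam : Fin N → ℝ) (hinj : Function.Injective lam)
    (hroot : ∀ k, phiP a b (N + 1) (lam k) = 0)
    (f : ℕ → ℝ) :
    ∀ n t : ℕ, 1 ≤ n → n ≤ N →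
      solF N a b f n t =
        ∑ k : Fin N,
          ((∑ i ∈ Finset.Icc 1 N, (phiP a b i (lam k)) ^ 2)⁻¹
              * ∑ s ∈ Finset.range (t + 1), chebU (lam k) s * f (t - s))
            * phiP a b n (lam k) := by
  have horth := row_orth N hN a b hapos lam hinj hroot
  suffices H : ∀ t n, 1 ≤ n → n ≤ N →
      solF N a b f n t = ∑ k : Fin N, coefC N a b lam f k t * phiP a b n (lam k) by
    intro n t h1 h2
    exact H t n h1 h2
  have hext : ∀ t, (∀ n, 1 ≤ n → n ≤ N →
        solF N a b f n t = ∑ k : Fin N, coefC N a b lam f k t * phiP a b n (lam k)) →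
      ∀ m, 1 ≤ m → m ≤ N+1 →
        solF N a b f m t = ∑ k : Fin N, coefC N a b lam f k t * phiP a b m (lam k) := by
    intro t hP m hm1 hm2
    rcases Nat.lt_or_ge m (N+1) with h | h
    · exact hP m hm1 (by omega)
    · have hm : m = N+1 := by omega
      subst hm
      rw [solF_gt N a b f (N+1) t hN (by omega)]
      simp only [hroot, mul_zero, Finset.sum_const_zero]
  intro t
  induction t using Nat.twoStepInduction with
  | zero =>
      intro n h1 h2
      rw [solF_zero N a b f n h1]
      simp only [coefC_zero, zero_mul, Finset.sum_const_zero]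
  | one =>
      intro n h1 h2
      have hrhs : ∑ k : Fin N, coefC N a b lam f k 1 * phiP a b n (lam k)
          = f 0 * (if n = 1 then 1 else 0) := by
        rw [← horth n h1 h2, Finset.mul_sum]
        apply Finset.sum_congr rfl
        intro k _
        rw [coefC_one]
        ring
      rw [hrhs]
      conv_lhs => rw [solF]
      rw [if_neg (by omega), if_neg (by omega)]
      rw [solF_zero N a b f (n+1) (by omega), solF_zero N a b f n h1]
      by_cases hn : n = 1
      · subst hn
        simp [solF_left, ha0]
      · rw [solF_zero N a b f (n-1) (by omega)]
        simp [hn]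
  | more t iht iht1 =>
      intro n h1 h2
      have e1 := hext (t+1) iht1 (n+1) (by omega) (by omega)
      have e3 := iht1 n h1 h2
      have e4 := iht n h1 h2
      have e2 : solF N a b f (n-1) (t+1)
          = (∑ k : Fin N, coefC N a b lam f k (t+1) * phiP a b (n-1) (lam k))
            + (if n = 1 then f (t+1) else 0) := by
        by_cases hn : n = 1
        · subst hn
          rw [if_pos rfl]
          simp [solF_left, phiP]
        · rw [if_neg hn, add_zero]
          exact iht1 (n-1) (by omega) (by omega)
      conv_lhs => rw [solF]
      rw [if_neg (by omega), if_neg (by omega)]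
      rw [e1, e2, e3, e4]
      have hexp : ∑ k : Fin N, coefC N a b lam f k (t+2) * phiP a b n (lam k)
          = a n * ∑ k : Fin N, coefC N a b lam f k (t+1) * phiP a b (n+1) (lam k)
            + a (n-1) * ∑ k : Fin N, coefC N a b lam f k (t+1) * phiP a b (n-1) (lam k)
            + b n * ∑ k : Fin N, coefC N a b lam f k (t+1) * phiP a b n (lam k)
            - ∑ k : Fin N, coefC N a b lam f k t * phiP a b n (lam k)
            + f (t+1) * ∑ k : Fin N,
                (∑ i ∈ Finset.Icc 1 N, (phiP a b i (lam k))^2)⁻¹ * phiP a b n (lam k) := by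
        rw [Finset.mul_sum, Finset.mul_sum, Finset.mul_sum, Finset.mul_sum,
          ← Finset.sum_add_distrib, ← Finset.sum_add_distrib, ← Finset.sum_sub_distrib,
          ← Finset.sum_add_distrib]
        apply Finset.sum_congr rfl
        intro k _
        have hc := coefC_rec N a b lam f k t
        have hs := phiP_rec a b hapos (lam k) n h1
        linear_combination (phiP a b n (lam k)) * hc - (coefC N a b lam f k (t+1)) * hs
      rw [hexp, horth n h1 h2]
      by_cases hn : n = 1
      · subst hn
        rw [if_pos rfl, if_pos rfl, ha0]
        ring
      · rw [if_neg hn, if_neg hn]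
        ring
end

section
/- Let W^T_N f = (v^f_{1,T},…,v^f_{N,T}) and C^T_N = (W^T_N)ᵀW^T_N for the finite system of size N. Let D_-^M : ℝ^M → ℝ^M be the shift (D_- f)_n = f_{n−1} (with (D_- f)_0 = 0, indices 0,…,M−1), let P : ℝ^{N+1} → ℝ^N delete the last coordinate and P* = Pᵀ extend by zero, and set B^N = P (D_-^{N+1})ᵀ C^{N+1}_N P* + C^N_N D_-^N. Then for every nonzero f ∈ ℝ^N and every λ ∈ ℝ: B^N f = λ C^N_N f if and only if W^N_N f is an eigenvector of the Jacobi matrix A^N with eigenvalue λ. -/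
open scoped BigOperators
open Matrix

/-- Extension of a finite control by zero. -/
def ctrl (T : ℕ) (f : Fin T → ℝ) : ℕ → ℝ := fun t => if h : t < T then f ⟨t, h⟩ else 0

/-- The control operator `W^T_N : ℝ^T → ℝ^N`, `f ↦ (v^f_{1,T},…,v^f_{N,T})`, as a matrix. -/
def WFinMat (N : ℕ) (a b : ℕ → ℝ) (T : ℕ) : Matrix (Fin N) (Fin T) ℝ :=
  Matrix.of fun n j => solF N a b (ctrl T (fun k => if k = j then 1 else 0)) ((n : ℕ) + 1) T

/-- Connecting operator `C^T_N = (W^T_N)ᵀ W^T_N`. -/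
def CFinMat (N : ℕ) (a b : ℕ → ℝ) (T : ℕ) : Matrix (Fin T) (Fin T) ℝ :=
  (WFinMat N a b T)ᵀ * WFinMat N a b T

/-- The shift matrix `D_- : ℝ^M → ℝ^M`, `(D_- f)_n = f_{n-1}` (and `(D_- f)_0 = 0`). -/
def DminusMat (M : ℕ) : Matrix (Fin M) (Fin M) ℝ :=
  Matrix.of fun i j => if (j : ℕ) + 1 = (i : ℕ) then 1 else 0

/-- The matrix `P : ℝ^{N+1} → ℝ^N` deleting the last coordinate. -/
def Pmat (N : ℕ) : Matrix (Fin N) (Fin (N + 1)) ℝ :=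
  Matrix.of fun i j => if (i : ℕ) = (j : ℕ) then 1 else 0

/-- `B^N = P (D_-^{N+1})ᵀ C^{N+1}_N P* + C^N_N D_-^N`. -/
def BMat (N : ℕ) (a b : ℕ → ℝ) : Matrix (Fin N) (Fin N) ℝ :=
  Pmat N * (DminusMat (N + 1))ᵀ * CFinMat N a b (N + 1) * (Pmat N)ᵀ
    + CFinMat N a b N * DminusMat N

/-- The `N×N` Jacobi matrix `A^N`. -/
def jacobiMat (N : ℕ) (a b : ℕ → ℝ) : Matrix (Fin N) (Fin N) ℝ :=
  Matrix.of fun i j =>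
    if (i : ℕ) = (j : ℕ) then b ((i : ℕ) + 1)
    else if (i : ℕ) + 1 = (j : ℕ) then a ((i : ℕ) + 1)
    else if (j : ℕ) + 1 = (i : ℕ) then a ((j : ℕ) + 1)
    else 0

def shiftc (g : ℕ → ℝ) : ℕ → ℝ := fun t => match t with | 0 => 0 | t+1 => g t

lemma solF_zero_n (N : ℕ) (a b g : ℕ → ℝ) (t : ℕ) : solF N a b g 0 t = g t := by
  match t with
  | 0 => simp [solF]
  | 1 => simp [solF]
  | t+2 => simp [solF]

lemma solF_zero_t (N : ℕ) (a b g : ℕ → ℝ) (n : ℕ) (hn : n ≠ 0) : solF N a b g n 0 = 0 := by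
  simp [solF, hn]

lemma solF_top (N : ℕ) (a b g : ℕ → ℝ) (n t : ℕ) (hn : N < n) : solF N a b g n t = 0 := by
  have hn0 : n ≠ 0 := by omega
  match t with
  | 0 => simp [solF, hn0]
  | 1 => simp [solF, hn0, hn]
  | t+2 => simp [solF, hn0, hn]

lemma solF_shift (N : ℕ) (a b g : ℕ → ℝ) : ∀ t n, solF N a b (shiftc g) n (t+1) = solF N a b g n t
  | 0, n => by
    rcases Nat.eq_zero_or_pos n with h | h
    · subst h; simp [solF, shiftc]
    · have hn : n ≠ 0 := by omega
      conv_lhs => rw [solF]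
      conv_rhs => rw [solF]
      by_cases hN : N < n
      · simp [hn, hN]
      · have h1 : solF N a b (shiftc g) (n+1) 0 = 0 := solF_zero_t _ _ _ _ _ (by omega)
        have h3 : solF N a b (shiftc g) n 0 = 0 := solF_zero_t _ _ _ _ _ hn
        have h2 : solF N a b (shiftc g) (n-1) 0 = 0 := by
          rcases Nat.eq_zero_or_pos (n-1) with h' | h'
          · rw [h', solF_zero_n]; rfl
          · exact solF_zero_t _ _ _ _ _ (by omega)
        simp [hn, hN, h1, h2, h3]
  | 1, n => by
    rcases Nat.eq_zero_or_pos n with h | h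
    · subst h; rw [solF_zero_n, solF_zero_n]; rfl
    · have hn : n ≠ 0 := by omega
      show solF N a b (shiftc g) n (0+2) = solF N a b g n 1
      conv_lhs => rw [solF]
      conv_rhs => rw [solF]
      by_cases hN : N < n
      · simp [hn, hN]
      · have e1 := solF_shift N a b g 0 (n+1)
        have e2 := solF_shift N a b g 0 (n-1)
        have e3 := solF_shift N a b g 0 n
        have e4 : solF N a b (shiftc g) n 0 = 0 := solF_zero_t _ _ _ _ _ hn
        simp only [zero_add] at e1 e2 e3
        simp [hn, hN, e1, e2, e3, e4]
  | (t+2), n => by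
    rcases Nat.eq_zero_or_pos n with h | h
    · subst h; rw [solF_zero_n, solF_zero_n]; rfl
    · have hn : n ≠ 0 := by omega
      show solF N a b (shiftc g) n (t+1+2) = solF N a b g n (t+2)
      conv_lhs => rw [solF]
      conv_rhs => rw [solF]
      by_cases hN : N < n
      · simp [hn, hN]
      · have e1 := solF_shift N a b g (t+1) (n+1)
        have e2 := solF_shift N a b g (t+1) (n-1)
        have e3 := solF_shift N a b g (t+1) n
        have e4 := solF_shift N a b g t n
        simp [hn, hN, e1, e2, e3, e4]

/-- `solF g n t` (for `n ≠ 0`, or `t < T`) depends only on `g` below `T` when `t ≤ T`. -/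
lemma solF_congr (N : ℕ) (a b : ℕ → ℝ) (g g' : ℕ → ℝ) (T : ℕ) (hg : ∀ s, s < T → g s = g' s) :
    ∀ t, t ≤ T → ∀ n, (n = 0 → t < T) → solF N a b g n t = solF N a b g' n t
  | 0, ht, n, hn0 => by
    rcases Nat.eq_zero_or_pos n with h | h
    · subst h; rw [solF_zero_n, solF_zero_n]; exact hg 0 (hn0 rfl)
    · rw [solF_zero_t _ _ _ _ _ (by omega), solF_zero_t _ _ _ _ _ (by omega)]
  | 1, ht, n, hn0 => by
    rcases Nat.eq_zero_or_pos n with h | h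
    · subst h; rw [solF_zero_n, solF_zero_n]; exact hg 1 (hn0 rfl)
    · have hn : n ≠ 0 := by omega
      conv_lhs => rw [solF]
      conv_rhs => rw [solF]
      by_cases hN : N < n
      · simp [hn, hN]
      · have e1 := solF_congr N a b g g' T hg 0 (by omega) (n+1) (by omega)
        have e2 := solF_congr N a b g g' T hg 0 (by omega) (n-1) (by omega)
        have e3 := solF_congr N a b g g' T hg 0 (by omega) n (by omega)
        simp [hn, hN, e1, e2, e3]
  | (t+2), ht, n, hn0 => by
    rcases Nat.eq_zero_or_pos n with h | h
    · subst h; rw [solF_zero_n, solF_zero_n]; exact hg (t+2) (hn0 rfl)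
    · have hn : n ≠ 0 := by omega
      conv_lhs => rw [solF]
      conv_rhs => rw [solF]
      by_cases hN : N < n
      · simp [hn, hN]
      · have e1 := solF_congr N a b g g' T hg (t+1) (by omega) (n+1) (by omega)
        have e2 := solF_congr N a b g g' T hg (t+1) (by omega) (n-1) (by omega)
        have e3 := solF_congr N a b g g' T hg (t+1) (by omega) n (by omega)
        have e4 := solF_congr N a b g g' T hg t (by omega) n (by omega)
        simp [hn, hN, e1, e2, e3, e4]

/-- linearity of `solF` in the control. -/
lemma solF_linear (N : ℕ) (a b : ℕ → ℝ) (c : ℝ) (g g' : ℕ → ℝ) :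
    ∀ t n, solF N a b (fun s => c * g s + g' s) n t
      = c * solF N a b g n t + solF N a b g' n t
  | 0, n => by
    rcases Nat.eq_zero_or_pos n with h | h
    · subst h; rw [solF_zero_n, solF_zero_n, solF_zero_n]
    · rw [solF_zero_t _ _ _ _ _ (by omega), solF_zero_t _ _ _ _ _ (by omega),
        solF_zero_t _ _ _ _ _ (by omega)]; ring
  | 1, n => by
    rcases Nat.eq_zero_or_pos n with h | h
    · subst h; rw [solF_zero_n, solF_zero_n, solF_zero_n]
    · have hn : n ≠ 0 := by omega
      conv_lhs => rw [solF]
      conv_rhs => enter [1,2]; rw [solF]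
      conv_rhs => enter [2]; rw [solF]
      by_cases hN : N < n
      · simp [hn, hN]
      · have e1 := solF_linear N a b c g g' 0 (n+1)
        have e2 := solF_linear N a b c g g' 0 (n-1)
        have e3 := solF_linear N a b c g g' 0 n
        simp only [hn, hN, if_false, e1, e2, e3]
        ring
  | (t+2), n => by
    rcases Nat.eq_zero_or_pos n with h | h
    · subst h; rw [solF_zero_n, solF_zero_n, solF_zero_n]
    · have hn : n ≠ 0 := by omega
      conv_lhs => rw [solF]
      conv_rhs => enter [1,2]; rw [solF]
      conv_rhs => enter [2]; rw [solF]
      by_cases hN : N < n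
      · simp [hn, hN]
      · have e1 := solF_linear N a b c g g' (t+1) (n+1)
        have e2 := solF_linear N a b c g g' (t+1) (n-1)
        have e3 := solF_linear N a b c g g' (t+1) n
        have e4 := solF_linear N a b c g g' t n
        simp only [hn, hN, if_false, e1, e2, e3, e4]
        ring

lemma solF_zero_ctrl (N : ℕ) (a b : ℕ → ℝ) : ∀ t n, solF N a b (fun _ => 0) n t = 0
  | 0, n => by
    rcases Nat.eq_zero_or_pos n with h | h
    · subst h; rw [solF_zero_n]
    · rw [solF_zero_t _ _ _ _ _ (by omega)]
  | 1, n => by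
    rcases Nat.eq_zero_or_pos n with h | h
    · subst h; rw [solF_zero_n]
    · have hn : n ≠ 0 := by omega
      conv_lhs => rw [solF]
      simp [hn, solF_zero_ctrl N a b 0 (n+1), solF_zero_ctrl N a b 0 (n-1),
        solF_zero_ctrl N a b 0 n]
  | (t+2), n => by
    rcases Nat.eq_zero_or_pos n with h | h
    · subst h; rw [solF_zero_n]
    · have hn : n ≠ 0 := by omega
      conv_lhs => rw [solF]
      simp [hn, solF_zero_ctrl N a b (t+1) (n+1), solF_zero_ctrl N a b (t+1) (n-1),
        solF_zero_ctrl N a b (t+1) n, solF_zero_ctrl N a b t n]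

def indc (j : ℕ) : ℕ → ℝ := fun s => if s = j then 1 else 0

lemma solF_indc_vanish (N : ℕ) (a b : ℕ → ℝ) (j : ℕ) :
    ∀ t n, t < n + j → solF N a b (indc j) n t = 0
  | 0, n, hlt => by
    rcases Nat.eq_zero_or_pos n with h | h
    · subst h; rw [solF_zero_n]; simp [indc]; omega
    · rw [solF_zero_t _ _ _ _ _ (by omega)]
  | 1, n, hlt => by
    rcases Nat.eq_zero_or_pos n with h | h
    · subst h; rw [solF_zero_n]; simp [indc]; omega
    · have hn : n ≠ 0 := by omega
      conv_lhs => rw [solF]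
      by_cases hN : N < n
      · simp [hn, hN]
      · have e1 := solF_indc_vanish N a b j 0 (n+1) (by omega)
        have e2 := solF_indc_vanish N a b j 0 (n-1) (by omega)
        have e3 := solF_indc_vanish N a b j 0 n (by omega)
        simp [hn, hN, e1, e2, e3]
  | (t+2), n, hlt => by
    rcases Nat.eq_zero_or_pos n with h | h
    · subst h; rw [solF_zero_n]; simp [indc]; omega
    · have hn : n ≠ 0 := by omega
      conv_lhs => rw [solF]
      by_cases hN : N < n
      · simp [hn, hN]
      · have e1 := solF_indc_vanish N a b j (t+1) (n+1) (by omega)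
        have e2 := solF_indc_vanish N a b j (t+1) (n-1) (by omega)
        have e3 := solF_indc_vanish N a b j (t+1) n (by omega)
        have e4 := solF_indc_vanish N a b j t n (by omega)
        simp [hn, hN, e1, e2, e3, e4]

lemma solF_indc_lead (N : ℕ) (a b : ℕ → ℝ) (j : ℕ) :
    ∀ n, n ≤ N → solF N a b (indc j) n (n + j) = ∏ k ∈ Finset.range n, a k
  | 0, _ => by rw [solF_zero_n]; simp [indc]
  | (n+1), hn => by
    have hN : ¬ N < n + 1 := by omega
    rcases Nat.eq_zero_or_pos (n + j) with h | h
    · have hn0 : n = 0 := by omega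
      have hj0 : j = 0 := by omega
      subst hn0; subst hj0
      conv_lhs => rw [show (0:ℕ)+1+0 = 1 from rfl, solF]
      rw [solF_zero_n]
      simp [hN, indc, solF_zero_t _ _ _ _ 2 (by omega), solF_zero_t _ _ _ _ 1 (by omega)]
    · obtain ⟨m, hm⟩ : ∃ m, n + j = m + 1 := ⟨n + j - 1, by omega⟩
      have key : solF N a b (indc j) (n+1) (m+2) = ∏ k ∈ Finset.range (n+1), a k := by
        conv_lhs => rw [solF]
        have e1 : solF N a b (indc j) (n+1+1) (m+1) = 0 :=
          solF_indc_vanish N a b j (m+1) (n+2) (by omega)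
        have e2 : solF N a b (indc j) n (m+1) = ∏ k ∈ Finset.range n, a k := by
          rw [show m+1 = n+j from hm.symm]; exact solF_indc_lead N a b j n (by omega)
        have e3 : solF N a b (indc j) (n+1) (m+1) = 0 :=
          solF_indc_vanish N a b j (m+1) (n+1) (by omega)
        have e4 : solF N a b (indc j) (n+1) m = 0 :=
          solF_indc_vanish N a b j m (n+1) (by omega)
        simp [hN, e1, e2, e3, e4, Finset.prod_range_succ, mul_comm]
      rw [show n+1+j = m+2 by omega]; exact key

lemma ctrl_delta (T : ℕ) (j : Fin T) :
    ctrl T (fun k => if k = j then 1 else 0) = indc (j : ℕ) := by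
  funext t
  simp only [ctrl, indc]
  by_cases h : t < T
  · simp only [h, dif_pos, Fin.ext_iff]
  · have : t ≠ (j : ℕ) := by have := j.isLt; omega
    simp [h, this]

lemma solF_finsum (N : ℕ) (a b : ℕ → ℝ) {ι : Type*} (u : Finset ι) (c : ι → ℝ)
    (g : ι → ℕ → ℝ) (n t : ℕ) :
    solF N a b (fun s => ∑ j ∈ u, c j * g j s) n t = ∑ j ∈ u, c j * solF N a b (g j) n t := by
  classical
  induction u using Finset.induction_on with
  | empty => simpa using solF_zero_ctrl N a b t n
  | insert j u' hj ih =>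
    rw [Finset.sum_insert hj]
    have : (fun s => ∑ k ∈ insert j u', c k * g k s)
        = fun s => c j * g j s + (fun s' => ∑ k ∈ u', c k * g k s') s := by
      funext s; rw [Finset.sum_insert hj]
    rw [this, solF_linear, ih]

lemma W_mulVec (N : ℕ) (a b : ℕ → ℝ) (T : ℕ) (f : Fin T → ℝ) (i : Fin N) :
    (WFinMat N a b T).mulVec f i = solF N a b (ctrl T f) ((i : ℕ) + 1) T := by
  have hctrl : ctrl T f = fun s => ∑ j : Fin T, f j * indc (j : ℕ) s := by
    funext s
    by_cases h : s < T
    · rw [Finset.sum_eq_single (⟨s, h⟩ : Fin T)]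
      · simp [ctrl, indc, h]
      · intro j _ hj
        have : s ≠ (j : ℕ) := fun hs => hj (by simp [Fin.ext_iff, ← hs])
        simp [indc, this]
      · simp
    · have : ∀ j : Fin T, s ≠ (j : ℕ) := fun j hs => h (hs ▸ j.isLt)
      simp [ctrl, h, indc, this]
  rw [hctrl, solF_finsum]
  simp only [Matrix.mulVec, dotProduct, WFinMat, Matrix.of_apply, ctrl_delta]
  exact Finset.sum_congr rfl fun j _ => by ring

lemma W_entry (N : ℕ) (a b : ℕ → ℝ) (T : ℕ) (i : Fin N) (j : Fin T) :
    WFinMat N a b T i j = solF N a b (indc (j : ℕ)) ((i : ℕ) + 1) T := by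
  simp [WFinMat, ctrl_delta]

lemma W_det_ne (N : ℕ) (a b : ℕ → ℝ) (hapos : ∀ n, 0 < a n) :
    (WFinMat N a b N).det ≠ 0 := by
  classical
  set M : Matrix (Fin N) (Fin N) ℝ := (WFinMat N a b N).submatrix id Fin.rev with hM
  have htri : M.BlockTriangular id := by
    intro i j hij
    simp only [hM, Matrix.submatrix_apply, id_eq]
    rw [W_entry]
    apply solF_indc_vanish
    have h1 : ((Fin.rev j) : ℕ) = N - ((j:ℕ) + 1) := Fin.val_rev j
    have h2 : (j:ℕ) < (i:ℕ) := hij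
    have := i.isLt
    omega
  have hdiag : ∀ i : Fin N, M i i = ∏ k ∈ Finset.range ((i : ℕ) + 1), a k := by
    intro i
    simp only [hM, Matrix.submatrix_apply, id_eq]
    rw [W_entry]
    have : N = (i : ℕ) + 1 + (i.rev : ℕ) := by
      have := i.isLt; simp only [Fin.val_rev]; omega
    rw [show solF N a b (indc (i.rev : ℕ)) ((i:ℕ)+1) N
        = solF N a b (indc (i.rev : ℕ)) ((i:ℕ)+1) ((i:ℕ)+1+(i.rev : ℕ)) by rw [← this]]
    exact solF_indc_lead N a b _ _ (by omega)
  have hMdet : M.det ≠ 0 := by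
    rw [Matrix.det_of_upperTriangular htri]
    apply Finset.prod_ne_zero_iff.2
    intro i _
    rw [hdiag i]
    exact ne_of_gt (Finset.prod_pos fun k _ => hapos k)
  intro hW
  apply hMdet
  have : M = (WFinMat N a b N).submatrix id ⇑(Fin.revPerm : Equiv.Perm (Fin N)) := rfl
  rw [this, Matrix.det_permute', hW, mul_zero]

lemma jacobi_step (N : ℕ) (a b : ℕ → ℝ) (ha0 : a 0 = 1) (g : ℕ → ℝ) (t : ℕ)
    (ht : 1 ≤ t) (hgt : g t = 0) (i : Fin N) :
    (jacobiMat N a b).mulVec (fun j : Fin N => solF N a b g ((j : ℕ) + 1) t) i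
      = solF N a b g ((i : ℕ) + 1) (t + 1) + solF N a b g ((i : ℕ) + 1) (t - 1) := by
  classical
  set u : Fin N → ℝ := fun j : Fin N => solF N a b g ((j : ℕ) + 1) t with hu
  obtain ⟨s, hs⟩ : ∃ s, t = s + 1 := ⟨t - 1, by omega⟩
  have hsplit : ∀ j : Fin N, jacobiMat N a b i j * u j
      = (if i = j then b ((i:ℕ)+1) * u j else 0)
        + ((if (i:ℕ)+1 = (j:ℕ) then a ((i:ℕ)+1) * u j else 0)
          + (if (j:ℕ)+1 = (i:ℕ) then a ((j:ℕ)+1) * u j else 0)) := by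
    intro j
    simp only [jacobiMat, Matrix.of_apply, Fin.ext_iff]
    split_ifs <;> try omega
    all_goals ring
  have hmv : (jacobiMat N a b).mulVec u i = ∑ j : Fin N, jacobiMat N a b i j * u j := rfl
  rw [hmv, Finset.sum_congr rfl fun j _ => hsplit j, Finset.sum_add_distrib,
    Finset.sum_add_distrib]
  have hS1 : (∑ j : Fin N, if i = j then b ((i:ℕ)+1) * u j else 0) = b ((i:ℕ)+1) * u i := by
    rw [Finset.sum_ite_eq]; simp
  have hS2 : (∑ j : Fin N, if (i:ℕ)+1 = (j:ℕ) then a ((i:ℕ)+1) * u j else 0)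
      = a ((i:ℕ)+1) * solF N a b g ((i:ℕ)+1+1) t := by
    by_cases hlt : (i:ℕ)+1 < N
    · rw [Finset.sum_eq_single (⟨(i:ℕ)+1, hlt⟩ : Fin N)]
      · simp [hu]
      · intro j _ hj
        have : ¬ ((i:ℕ)+1 = (j:ℕ)) := fun h => hj (by simp [Fin.ext_iff]; omega)
        simp [this]
      · simp
    · have hz : solF N a b g ((i:ℕ)+1+1) t = 0 := solF_top _ _ _ _ _ _ (by have := i.isLt; omega)
      rw [hz, mul_zero]
      apply Finset.sum_eq_zero
      intro j _
      have : ¬ ((i:ℕ)+1 = (j:ℕ)) := by have := j.isLt; omega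
      simp [this]
  have hS3 : (∑ j : Fin N, if (j:ℕ)+1 = (i:ℕ) then a ((j:ℕ)+1) * u j else 0)
      = a (i:ℕ) * solF N a b g (i:ℕ) t := by
    by_cases hpos : 0 < (i:ℕ)
    · have hlt : (i:ℕ)-1 < N := by have := i.isLt; omega
      rw [Finset.sum_eq_single (⟨(i:ℕ)-1, hlt⟩ : Fin N)]
      · simp only [hu]
        rw [show (i:ℕ)-1+1 = (i:ℕ) by omega]
        simp
      · intro j _ hj
        have : ¬ ((j:ℕ)+1 = (i:ℕ)) := fun h => hj (by simp [Fin.ext_iff]; omega)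
        simp [this]
      · simp
    · have hi0 : (i:ℕ) = 0 := by omega
      rw [hi0, ha0, solF_zero_n, hgt, mul_zero]
      apply Finset.sum_eq_zero
      intro j _
      have : ¬ ((j:ℕ)+1 = (i:ℕ)) := by omega
      simp [this]
  rw [hS1, hS2, hS3]
  -- now use the recurrence for solF at (i+1, t+1)
  subst hs
  have hrec : solF N a b g ((i:ℕ)+1) (s+2)
      = a ((i:ℕ)+1) * solF N a b g ((i:ℕ)+1+1) (s+1)
        + a (i:ℕ) * solF N a b g (i:ℕ) (s+1)
        + b ((i:ℕ)+1) * solF N a b g ((i:ℕ)+1) (s+1)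
        - solF N a b g ((i:ℕ)+1) s := by
    conv_lhs => rw [solF]
    have h1 : ((i:ℕ)+1) ≠ 0 := by omega
    have h2 : ¬ (N < (i:ℕ)+1) := by have := i.isLt; omega
    simp only [h1, h2, if_false]
    norm_num
  rw [show s+1+1 = s+2 from rfl, hrec]
  simp only [hu, Nat.add_sub_cancel]
  ring

lemma indc_succ (j : ℕ) : indc (j+1) = shiftc (indc j) := by
  funext t
  match t with
  | 0 => simp [indc, shiftc]
  | t+1 => simp [indc, shiftc]

/-- `W^N = W^{N+1} D_- P*`. -/
lemma W_factor (N : ℕ) (a b : ℕ → ℝ) :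
    WFinMat N a b N = WFinMat N a b (N+1) * DminusMat (N+1) * (Pmat N)ᵀ := by
  classical
  ext i j
  have hDP : ∀ k : Fin (N+1), (DminusMat (N+1) * (Pmat N)ᵀ) k j
      = if (j:ℕ)+1 = (k:ℕ) then 1 else 0 := by
    intro k
    simp only [Matrix.mul_apply, DminusMat, Pmat, Matrix.transpose_apply, Matrix.of_apply]
    rw [Finset.sum_eq_single (Fin.castSucc j)]
    · simp [Fin.ext_iff]
    · intro l _ hl
      have : ¬ ((j:ℕ) = (l:ℕ)) := fun h => hl (by simp [Fin.ext_iff]; omega)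
      simp [this]
    · simp
  rw [Matrix.mul_assoc, Matrix.mul_apply]
  simp only [hDP]
  rw [Finset.sum_eq_single (⟨(j:ℕ)+1, by have := j.isLt; omega⟩ : Fin (N+1))]
  · simp only [mul_one, if_pos rfl, W_entry]
    rw [if_pos trivial, mul_one, indc_succ]
    exact (solF_shift N a b (indc (j:ℕ)) N ((i:ℕ)+1)).symm
  · intro k _ hk
    have : ¬ ((j:ℕ)+1 = (k:ℕ)) := fun h => hk (by simp [Fin.ext_iff]; omega)
    simp [this]
  · simp

lemma Pt_mulVec (N : ℕ) (f : Fin N → ℝ) (k : Fin (N+1)) :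
    (Pmat N)ᵀ.mulVec f k = if h : (k:ℕ) < N then f ⟨(k:ℕ), h⟩ else 0 := by
  classical
  simp only [Matrix.mulVec, dotProduct, Pmat, Matrix.transpose_apply, Matrix.of_apply]
  by_cases h : (k:ℕ) < N
  · rw [dif_pos h, Finset.sum_eq_single (⟨(k:ℕ), h⟩ : Fin N)]
    · simp
    · intro l _ hl
      have : ¬ ((l:ℕ) = (k:ℕ)) := fun hh => hl (by simp [Fin.ext_iff]; omega)
      simp [this]
    · simp
  · rw [dif_neg h]
    apply Finset.sum_eq_zero
    intro l _
    have : ¬ ((l:ℕ) = (k:ℕ)) := by have := l.isLt; omega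
    simp [this]

lemma Dminus_mulVec (N : ℕ) (f : Fin N → ℝ) (k : Fin N) :
    (DminusMat N).mulVec f k
      = if h : 0 < (k:ℕ) then f ⟨(k:ℕ)-1, by have := k.isLt; omega⟩ else 0 := by
  classical
  simp only [Matrix.mulVec, dotProduct, DminusMat, Matrix.of_apply]
  by_cases h : 0 < (k:ℕ)
  · rw [dif_pos h, Finset.sum_eq_single (⟨(k:ℕ)-1, by have := k.isLt; omega⟩ : Fin N)]
    · have hc : (k:ℕ)-1+1 = (k:ℕ) := by omega
      simp [hc]
    · intro l _ hl
      have : ¬ ((l:ℕ)+1 = (k:ℕ)) := fun hh => hl (by simp [Fin.ext_iff]; omega)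
      simp [this]
    · simp
  · rw [dif_neg h]
    apply Finset.sum_eq_zero
    intro l _
    have : ¬ ((l:ℕ)+1 = (k:ℕ)) := by omega
    simp [this]

/-- `A W^N f = W^{N+1} P* f + W^N D_- f`. -/
lemma AW_eq (N : ℕ) (hN : 1 ≤ N) (a b : ℕ → ℝ) (ha0 : a 0 = 1) (f : Fin N → ℝ) :
    (jacobiMat N a b).mulVec ((WFinMat N a b N).mulVec f)
      = (WFinMat N a b (N+1)).mulVec ((Pmat N)ᵀ.mulVec f)
        + (WFinMat N a b N).mulVec ((DminusMat N).mulVec f) := by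
  classical
  funext i
  set g : ℕ → ℝ := ctrl N f with hg
  have hWf : (WFinMat N a b N).mulVec f = fun j : Fin N => solF N a b g ((j:ℕ)+1) N := by
    funext j; exact W_mulVec N a b N f j
  have hstep := jacobi_step N a b ha0 g N hN (by simp [hg, ctrl]) i
  rw [hWf, hstep]
  -- first summand
  have h1 : (WFinMat N a b (N+1)).mulVec ((Pmat N)ᵀ.mulVec f) i
      = solF N a b g ((i:ℕ)+1) (N+1) := by
    rw [W_mulVec]
    have hctrl' : ctrl (N+1) ((Pmat N)ᵀ.mulVec f) = g := by
      funext t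
      simp only [ctrl, hg]
      by_cases ht : t < N+1
      · rw [dif_pos ht, Pt_mulVec]
      · rw [dif_neg ht, dif_neg (by omega)]
    rw [hctrl']
  -- second summand
  have h2 : (WFinMat N a b N).mulVec ((DminusMat N).mulVec f) i
      = solF N a b g ((i:ℕ)+1) (N-1) := by
    rw [W_mulVec]
    have hagree : ∀ s, s < N → ctrl N ((DminusMat N).mulVec f) s = shiftc g s := by
      intro s hs
      rw [show ctrl N ((DminusMat N).mulVec f) s = (DminusMat N).mulVec f ⟨s, hs⟩ from
        dif_pos hs, Dminus_mulVec]
      match s with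
      | 0 => simp [shiftc]
      | s+1 =>
        rw [dif_pos (by simp)]
        simp only [shiftc, hg, ctrl]
        rw [dif_pos (by omega : s < N)]
        congr 1
    have hsh := solF_shift N a b g (N-1) ((i:ℕ)+1)
    rw [show (N-1)+1 = N by omega] at hsh
    rw [solF_congr N a b _ (shiftc g) N hagree N le_rfl ((i:ℕ)+1) (by omega), hsh]
  rw [Pi.add_apply, h1, h2]
/-- for nonzero `f` and `λ ∈ ℝ`, `B^N f = λ C^N_N f` iff `W^N_N f` is an
eigenvector of the Jacobi matrix `A^N` with eigenvalue `λ`. -/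
theorem generalized_spectral_problem_iff_eigenvector
    (N : ℕ) (hN : 1 ≤ N) (a b : ℕ → ℝ) (ha0 : a 0 = 1) (hapos : ∀ n, 0 < a n)
    (f : Fin N → ℝ) (hf : f ≠ 0) (lam : ℝ) :
    (BMat N a b).mulVec f = lam • (CFinMat N a b N).mulVec f ↔
      ((jacobiMat N a b).mulVec ((WFinMat N a b N).mulVec f)
          = lam • (WFinMat N a b N).mulVec f
        ∧ (WFinMat N a b N).mulVec f ≠ 0) := by
  classical
  set W := WFinMat N a b N with hW
  have hdet : W.det ≠ 0 := W_det_ne N a b hapos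
  have hdetT : Wᵀ.det ≠ 0 := by rw [Matrix.det_transpose]; exact hdet
  have hWinj : ∀ v : Fin N → ℝ, W.mulVec v = 0 → v = 0 := by
    intro v hv
    by_contra hv0
    exact hdet (Matrix.exists_mulVec_eq_zero_iff.1 ⟨v, hv0, hv⟩)
  have hWTinj : ∀ x y : Fin N → ℝ, Wᵀ.mulVec x = Wᵀ.mulVec y → x = y := by
    intro x y hxy
    have h0 : Wᵀ.mulVec (x - y) = 0 := by
      rw [Matrix.mulVec_sub, hxy, sub_self]
    by_contra hne
    exact hdetT (Matrix.exists_mulVec_eq_zero_iff.1 ⟨x - y, sub_ne_zero.2 hne, h0⟩)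
  have hWt : Wᵀ = Pmat N * (DminusMat (N+1))ᵀ * (WFinMat N a b (N+1))ᵀ := by
    rw [hW, W_factor N a b]
    simp [Matrix.transpose_mul, Matrix.mul_assoc]
  have hB : BMat N a b
      = Wᵀ * (WFinMat N a b (N+1) * (Pmat N)ᵀ) + Wᵀ * (W * DminusMat N) := by
    rw [BMat, CFinMat, CFinMat, ← hW, hWt]
    simp only [Matrix.mul_assoc]
  have hBf : (BMat N a b).mulVec f
      = Wᵀ.mulVec ((jacobiMat N a b).mulVec (W.mulVec f)) := by
    rw [hW, AW_eq N hN a b ha0 f, hB]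
    rw [Matrix.add_mulVec, ← Matrix.mulVec_mulVec, ← Matrix.mulVec_mulVec,
      ← Matrix.mulVec_mulVec, ← Matrix.mulVec_mulVec, ← Matrix.mulVec_add]
  have hCf : (CFinMat N a b N).mulVec f = Wᵀ.mulVec (W.mulVec f) := by
    rw [CFinMat, ← hW, ← Matrix.mulVec_mulVec]
  constructor
  · intro h
    have hWf : W.mulVec f ≠ 0 := fun h0 => hf (hWinj f h0)
    refine ⟨?_, hWf⟩
    rw [hBf, hCf] at h
    have h2 : Wᵀ.mulVec ((jacobiMat N a b).mulVec (W.mulVec f))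
        = Wᵀ.mulVec (lam • W.mulVec f) := by
      rw [h, Matrix.mulVec_smul]
    exact hWTinj _ _ h2
  · rintro ⟨h, -⟩
    rw [hBf, hCf, h, Matrix.mulVec_smul]
end

section
/- Let N ≥ 1 and let s_0, …, s_{2N−1} be real numbers such that the Hankel matrices satisfy S^N_0 − S^N_1 ≥ 0 (positive semidefinite) and S^N_1 > 0 (positive definite). Then the sequence is completely monotonic up to order 2N−1: (−1)^k (Δ^k s)_n ≥ 0 for all integers k, n ≥ 0 with k + n ≤ 2N−1. -/
open Matrix

/-- The difference operator: `(Δ s)_n = s_{n+1} − s_n`. -/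
def deltaOp (s : ℕ → ℝ) : ℕ → ℝ := fun n => s (n + 1) - s n

/-- The Hankel matrix `S^N_m`: `(S^N_m)_{ij} = s_{2N+m-i-j}` (1-based). -/
def hankelS (N m : ℕ) (s : ℕ → ℝ) : Matrix (Fin N) (Fin N) ℝ :=
  Matrix.of fun i j => s (2 * N + m - (i : ℕ) - (j : ℕ) - 2)

open Polynomial Finset

noncomputable def Lfun (N : ℕ) (s : ℕ → ℝ) (p : ℝ[X]) : ℝ :=
  ∑ j ∈ Finset.range (2 * N), p.coeff j * s j

lemma Lfun_sub (N : ℕ) (s : ℕ → ℝ) (p q : ℝ[X]) :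
    Lfun N s (p - q) = Lfun N s p - Lfun N s q := by
  simp [Lfun, coeff_sub, sub_mul, Finset.sum_sub_distrib]

lemma Lfun_sum {ι : Type*} (N : ℕ) (s : ℕ → ℝ) (t : Finset ι) (f : ι → ℝ[X]) :
    Lfun N s (∑ i ∈ t, f i) = ∑ i ∈ t, Lfun N s (f i) := by
  simp only [Lfun, finset_sum_coeff, Finset.sum_mul]
  exact Finset.sum_comm

lemma Lfun_C_mul (N : ℕ) (s : ℕ → ℝ) (r : ℝ) (p : ℝ[X]) :
    Lfun N s (C r * p) = r * Lfun N s p := by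
  simp [Lfun, coeff_C_mul, Finset.mul_sum, mul_assoc]

lemma Lfun_monomial (N : ℕ) (s : ℕ → ℝ) (d : ℕ) (c : ℝ) (hd : d < 2 * N) :
    Lfun N s (monomial d c) = c * s d := by
  rw [Lfun, Finset.sum_eq_single d]
  · simp
  · intro b _ hb; simp only [coeff_monomial]; rw [if_neg (Ne.symm hb)]; simp
  · intro h; exact absurd (Finset.mem_range.2 hd) h

lemma aux_rep (N : ℕ) (q : ℝ[X]) (hq : ∀ i, N ≤ i → q.coeff i = 0) :
    q = ∑ a ∈ Finset.range N, monomial a (q.coeff a) := by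
  ext n
  rw [finset_sum_coeff]
  by_cases h : n < N
  · rw [Finset.sum_eq_single n]
    · simp
    · intro b _ hb; simp only [coeff_monomial]; rw [if_neg hb]
    · intro h'; exact absurd (Finset.mem_range.2 h) h'
  · rw [hq n (le_of_not_gt h)]
    apply (Finset.sum_eq_zero _).symm
    intro b hb
    have hbn : b ≠ n := by intro e; exact h (e ▸ Finset.mem_range.1 hb)
    simp only [coeff_monomial]; rw [if_neg hbn]

lemma quad_expand_X (N : ℕ) (hN : 1 ≤ N) (s : ℕ → ℝ) (q : ℝ[X])
    (hq : ∀ i, N ≤ i → q.coeff i = 0) :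
    Lfun N s (X * (q * q)) =
      ∑ a ∈ Finset.range N, ∑ b ∈ Finset.range N,
        q.coeff a * q.coeff b * s (1 + a + b) := by
  conv_lhs => rw [aux_rep N q hq, Finset.sum_mul_sum, Finset.mul_sum]
  rw [Lfun_sum]
  refine Finset.sum_congr rfl fun a ha => ?_
  rw [Finset.mul_sum, Lfun_sum]
  refine Finset.sum_congr rfl fun b hb => ?_
  have ha := Finset.mem_range.1 ha
  have hb := Finset.mem_range.1 hb
  rw [monomial_mul_monomial, ← monomial_one_one_eq_X, monomial_mul_monomial,
    Lfun_monomial _ _ _ _ (by omega)]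
  ring_nf

lemma quad_expand_noX (N : ℕ) (hN : 1 ≤ N) (s : ℕ → ℝ) (q : ℝ[X])
    (hq : ∀ i, N ≤ i → q.coeff i = 0) :
    Lfun N s (q * q) =
      ∑ a ∈ Finset.range N, ∑ b ∈ Finset.range N,
        q.coeff a * q.coeff b * s (a + b) := by
  conv_lhs => rw [aux_rep N q hq, Finset.sum_mul_sum]
  rw [Lfun_sum]
  refine Finset.sum_congr rfl fun a ha => ?_
  rw [Lfun_sum]
  refine Finset.sum_congr rfl fun b hb => ?_
  have ha := Finset.mem_range.1 ha
  have hb := Finset.mem_range.1 hb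
  rw [monomial_mul_monomial, Lfun_monomial _ _ _ _ (by omega)]

lemma quad_form_eq (N : ℕ) (hN : 1 ≤ N) (s : ℕ → ℝ) (m : ℕ) (q : ℝ[X]) :
    (fun i : Fin N => q.coeff (N - 1 - (i : ℕ))) ⬝ᵥ
      (hankelS N m s *ᵥ fun i : Fin N => q.coeff (N - 1 - (i : ℕ))) =
    ∑ a ∈ Finset.range N, ∑ b ∈ Finset.range N,
      q.coeff a * q.coeff b * s (m + a + b) := by
  simp only [dotProduct, mulVec, hankelS, Matrix.of_apply, Finset.mul_sum]
  rw [Fin.sum_univ_eq_sum_range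
    (fun a => ∑ i : Fin N, q.coeff (N - 1 - a) * (s (2 * N + m - a - (i:ℕ) - 2) * q.coeff (N - 1 - (i:ℕ))))]
  rw [← Finset.sum_range_reflect]
  refine Finset.sum_congr rfl fun a ha => ?_
  rw [Fin.sum_univ_eq_sum_range
    (fun b => q.coeff (N - 1 - (N - 1 - a)) * (s (2 * N + m - (N - 1 - a) - b - 2) * q.coeff (N - 1 - b)))]
  rw [← Finset.sum_range_reflect]
  refine Finset.sum_congr rfl fun b hb => ?_
  have ha := Finset.mem_range.1 ha
  have hb := Finset.mem_range.1 hb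
  have h1 : N - 1 - (N - 1 - a) = a := by omega
  have h2 : N - 1 - (N - 1 - b) = b := by omega
  have h3 : 2 * N + m - (N - 1 - a) - (N - 1 - b) - 2 = m + a + b := by omega
  rw [h1, h2, h3]; ring

lemma L_pos_X (N : ℕ) (hN : 1 ≤ N) (s : ℕ → ℝ)
    (h1 : (hankelS N 1 s).PosDef) (q : ℝ[X])
    (hq : ∀ i, N ≤ i → q.coeff i = 0) :
    0 ≤ Lfun N s (X * (q * q)) := by
  rw [quad_expand_X N hN s q hq]
  have := h1.posSemidef.dotProduct_mulVec_nonneg (fun i : Fin N => q.coeff (N - 1 - (i : ℕ)))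
  rw [show (star fun i : Fin N => q.coeff (N - 1 - (i : ℕ))) =
      (fun i : Fin N => q.coeff (N - 1 - (i : ℕ))) from rfl] at this
  rw [quad_form_eq N hN s 1 q] at this
  exact this

lemma L_pos_one_sub_X (N : ℕ) (hN : 1 ≤ N) (s : ℕ → ℝ)
    (h0 : (hankelS N 0 s - hankelS N 1 s).PosSemidef) (q : ℝ[X])
    (hq : ∀ i, N ≤ i → q.coeff i = 0) :
    0 ≤ Lfun N s ((1 - X) * (q * q)) := by
  have e : ((1 - X) * (q * q) : ℝ[X]) = q * q - X * (q * q) := by ring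
  rw [e, Lfun_sub, quad_expand_X N hN s q hq, quad_expand_noX N hN s q hq]
  have := h0.dotProduct_mulVec_nonneg (fun i : Fin N => q.coeff (N - 1 - (i : ℕ)))
  rw [show (star fun i : Fin N => q.coeff (N - 1 - (i : ℕ))) =
      (fun i : Fin N => q.coeff (N - 1 - (i : ℕ))) from rfl] at this
  rw [Matrix.sub_mulVec, dotProduct_sub, quad_form_eq N hN s 0 q,
    quad_form_eq N hN s 1 q] at this
  rw [← Finset.sum_sub_distrib]
  refine le_trans this (le_of_eq ?_)
  rw [← Finset.sum_sub_distrib]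
  refine Finset.sum_congr rfl fun a _ => ?_
  rw [← Finset.sum_sub_distrib, ← Finset.sum_sub_distrib]
  refine Finset.sum_congr rfl fun b _ => ?_
  rw [show (0:ℕ) + a + b = a + b from by omega]

lemma natDegree_one_sub_X : (1 - X : ℝ[X]).natDegree ≤ 1 :=
  le_trans (natDegree_sub_le _ _) (by simp)

lemma term_nonneg (N : ℕ) (hN : 1 ≤ N) (s : ℕ → ℝ)
    (h0 : (hankelS N 0 s - hankelS N 1 s).PosSemidef)
    (h1 : (hankelS N 1 s).PosDef)
    (a b : ℕ) (hab : a + b = 2 * N - 1) :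
    0 ≤ Lfun N s (X ^ a * (1 - X) ^ b) := by
  have hdeg : ∀ c d : ℕ, (X ^ c * (1 - X) ^ d : ℝ[X]).natDegree ≤ c + d := by
    intro c d
    refine le_trans (natDegree_mul_le) ?_
    have h1' : (X ^ c : ℝ[X]).natDegree ≤ c := by simp
    have h2' : ((1 - X : ℝ[X]) ^ d).natDegree ≤ d := by
      refine le_trans (natDegree_pow_le) ?_
      calc d * (1 - X : ℝ[X]).natDegree ≤ d * 1 := Nat.mul_le_mul_left d natDegree_one_sub_X
        _ = d := by omega
    omega
  rcases Nat.even_or_odd a with he | ho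
  · -- a even, b odd
    obtain ⟨c, hc⟩ := he
    have hbodd : b % 2 = 1 := by omega
    obtain ⟨d, hd⟩ : ∃ d, b = 2 * d + 1 := ⟨b / 2, by omega⟩
    set q : ℝ[X] := X ^ c * (1 - X) ^ d with hqdef
    have hrw : (X ^ a * (1 - X) ^ b : ℝ[X]) = (1 - X) * (q * q) := by
      rw [hc, hd, hqdef]; ring
    rw [hrw]
    refine L_pos_one_sub_X N hN s h0 q ?_
    intro i hi
    refine coeff_eq_zero_of_natDegree_lt (lt_of_le_of_lt (hdeg c d) ?_)
    omega
  · obtain ⟨c, hc⟩ := ho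
    have hbe : b % 2 = 0 := by omega
    obtain ⟨d, hd⟩ : ∃ d, b = 2 * d := ⟨b / 2, by omega⟩
    set q : ℝ[X] := X ^ c * (1 - X) ^ d with hqdef
    have hrw : (X ^ a * (1 - X) ^ b : ℝ[X]) = X * (q * q) := by
      rw [hc, hd, hqdef]; ring
    rw [hrw]
    refine L_pos_X N hN s h1 q ?_
    intro i hi
    refine coeff_eq_zero_of_natDegree_lt (lt_of_le_of_lt (hdeg c d) ?_)
    omega

lemma delta_eq_L (N : ℕ) (hN : 1 ≤ N) (s : ℕ → ℝ) :
    ∀ k n : ℕ, k + n ≤ 2 * N - 1 →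
      (-1 : ℝ) ^ k * (deltaOp^[k] s n) = Lfun N s (X ^ n * (1 - X) ^ k) := by
  intro k
  induction k with
  | zero =>
    intro n hn
    simp only [pow_zero, one_mul, Function.iterate_zero, id_eq, mul_one]
    rw [← monomial_one_right_eq_X_pow, Lfun_monomial _ _ _ _ (by omega), one_mul]
  | succ k ih =>
    intro n hn
    have h1 : (-1 : ℝ) ^ (k + 1) * (deltaOp^[k + 1] s n) =
        (-1 : ℝ) ^ k * (deltaOp^[k] s n) - (-1 : ℝ) ^ k * (deltaOp^[k] s (n + 1)) := by
      rw [Function.iterate_succ_apply']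
      show (-1:ℝ)^(k+1) * (deltaOp (deltaOp^[k] s) n) = _
      simp only [deltaOp]
      ring
    rw [h1, ih n (by omega), ih (n + 1) (by omega)]
    rw [← Lfun_sub]
    congr 1
    ring

/-- if `S^N_0 − S^N_1 ≥ 0` and `S^N_1 > 0`, then the sequence is completely
monotonic up to order `2N−1`: `(−1)^k (Δ^k s)_n ≥ 0` for `k + n ≤ 2N−1`. -/
theorem hankel_positivity_implies_complete_monotonicity
    (N : ℕ) (hN : 1 ≤ N) (s : ℕ → ℝ)
    (h0 : (hankelS N 0 s - hankelS N 1 s).PosSemidef)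
    (h1 : (hankelS N 1 s).PosDef) :
    ∀ k n : ℕ, k + n ≤ 2 * N - 1 → 0 ≤ (-1 : ℝ) ^ k * (deltaOp^[k] s n) := by
  intro k n hkn
  rw [delta_eq_L N hN s k n hkn]
  set m := 2 * N - 1 - n - k with hm
  have hone : ((X + (1 - X) : ℝ[X])) ^ m = 1 := by
    have : (X + (1 - X) : ℝ[X]) = 1 := by ring
    rw [this, one_pow]
  have hdec : (X ^ n * (1 - X) ^ k : ℝ[X]) =
      ∑ j ∈ Finset.range (m + 1),
        C ((Nat.choose m j : ℝ)) * (X ^ (n + j) * (1 - X) ^ (k + (m - j))) := by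
    calc (X ^ n * (1 - X) ^ k : ℝ[X])
        = X ^ n * (1 - X) ^ k * ((X + (1 - X)) ^ m) := by rw [hone, mul_one]
      _ = X ^ n * (1 - X) ^ k *
          ∑ j ∈ Finset.range (m + 1), X ^ j * (1 - X) ^ (m - j) * (Nat.choose m j : ℝ[X]) := by
          rw [add_pow]
      _ = ∑ j ∈ Finset.range (m + 1),
          C ((Nat.choose m j : ℝ)) * (X ^ (n + j) * (1 - X) ^ (k + (m - j))) := by
          rw [Finset.mul_sum]
          refine Finset.sum_congr rfl fun j _ => ?_
          rw [Polynomial.C_eq_natCast]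
          rw [pow_add, pow_add]
          push_cast
          ring
  rw [hdec, Lfun_sum]
  refine Finset.sum_nonneg fun j hj => ?_
  rw [Lfun_C_mul]
  have hj' := Finset.mem_range.1 hj
  refine mul_nonneg (by positivity) ?_
  refine term_nonneg N hN s h0 h1 _ _ ?_
  omega
end

section
/- There exist real numbers s_0, s_1, s_2, s_3 such that (−1)^k (Δ^k s)_n ≥ 0 for all integers k, n ≥ 0 with k + n ≤ 3, and yet s_0 s_2 − s_1² < 0, so the 2×2 Hankel matrix with rows (s_2, s_1) and (s_1, s_0) is not positive semidefinite; hence complete monotonicity up to order 2N−1 does not imply the positivity conditions S^N_0 ≥ S^N_1 > 0 (here with N = 2). -/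
open Matrix

/-- complete monotonicity up to order `2N−1` (here `N = 2`) does not imply
the Hankel positivity conditions: there are `s_0,…,s_3` with `(−1)^k (Δ^k s)_n ≥ 0` for
`k + n ≤ 3` but `s_0 s_2 − s_1² < 0`, so `S^2_0` is not positive semidefinite. -/
theorem complete_monotonicity_does_not_imply_hankel_positivity :
    ∃ s : ℕ → ℝ,
      (∀ k n : ℕ, k + n ≤ 3 → 0 ≤ (-1 : ℝ) ^ k * (deltaOp^[k] s n)) ∧
      s 0 * s 2 - (s 1) ^ 2 < 0 ∧
      ¬ (hankelS 2 0 s).PosSemidef := by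
  refine ⟨fun n => if n = 0 then 3 else if n = 1 then 1 else if n = 2 then 1/5 else 1/10,
    ?_, by norm_num, ?_⟩
  · intro k n hkn
    have hk : k ≤ 3 := le_trans (Nat.le_add_right _ _) hkn
    have hn : n ≤ 3 := le_trans (Nat.le_add_left _ _) hkn
    interval_cases k <;> interval_cases n <;> (try omega) <;>
      simp [deltaOp, Function.iterate_succ, Function.comp] <;> norm_num
  · intro h
    have := (Matrix.posSemidef_iff_dotProduct_mulVec.mp h).2 ![-5, 1]
    simp [hankelS, dotProduct, Matrix.mulVec, Fin.sum_univ_two] at this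
    norm_num at this
end
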